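/- For any two permutations σ, π of {1,...,n}, the Kendall tau distance and the Spearman footrule distance satisfy d_τ(σ,π) ≤ d_S(σ,π) ≤ 2 d_τ(σ,π). -/

import Mathlib

/-- Kendall tau distance between two permutations of `Fin n`. -/
def kendall {n : ℕ} (σ π : Equiv.Perm (Fin n)) : ℕ :=
  (Finset.univ.filter (fun p : Fin n × Fin n =>
    p.1 < p.2 ∧ ((σ p.1 < σ p.2 ∧ π p.2 < π p.1) ∨ (σ p.2 < σ p.1 ∧ π p.1 < π p.2)))).card

/-- Spearman footrule distance `Σ_x |σ(x) - π(x)|`. -/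
def spearman {n : ℕ} (σ π : Equiv.Perm (Fin n)) : ℕ :=
  ∑ x : Fin n, ((σ x : ℤ) - (π x : ℤ)).natAbs

namespace DG
variable {n : ℕ}

def invSet (ρ : Equiv.Perm (Fin n)) : Finset (Fin n × Fin n) :=
  Finset.univ.filter (fun p => p.1 < p.2 ∧ ρ p.2 < ρ p.1)

def inv' (ρ : Equiv.Perm (Fin n)) : ℕ := (invSet ρ).card

def disp (ρ : Equiv.Perm (Fin n)) : ℕ := ∑ x : Fin n, ((ρ x : ℤ) - (x : ℤ)).natAbs

lemma card_pairs (P : Fin n → Fin n → Prop) [∀ x y, Decidable (P x y)] :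
    (Finset.univ.filter fun p : Fin n × Fin n => P p.1 p.2).card
      = ∑ x : Fin n, (Finset.univ.filter fun y => P x y).card := by
  rw [Finset.card_eq_sum_card_fiberwise (f := Prod.fst) (t := Finset.univ)
    (fun p _ => Finset.mem_univ _)]
  refine Finset.sum_congr rfl fun x _ => ?_
  refine Finset.card_bij' (fun p _ => p.2) (fun y _ => (x, y)) ?_ ?_ ?_ ?_
  · intro p hp
    simp only [Finset.mem_filter, Finset.mem_univ, true_and] at hp ⊢
    rcases hp with ⟨h1, h2⟩; subst h2; exact h1
  · intro y hy
    simp only [Finset.mem_filter, Finset.mem_univ, true_and] at hy ⊢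
    exact ⟨hy, trivial⟩
  · intro p hp
    simp only [Finset.mem_filter, Finset.mem_univ, true_and] at hp
    exact Prod.ext hp.2.symm rfl
  · intro y _; rfl

lemma card_pairs_snd (P : Fin n → Fin n → Prop) [∀ x y, Decidable (P x y)] :
    (Finset.univ.filter fun p : Fin n × Fin n => P p.1 p.2).card
      = ∑ y : Fin n, (Finset.univ.filter fun x => P x y).card := by
  rw [Finset.card_eq_sum_card_fiberwise (f := Prod.snd) (t := Finset.univ)
    (fun p _ => Finset.mem_univ _)]
  refine Finset.sum_congr rfl fun y _ => ?_
  refine Finset.card_bij' (fun p _ => p.1) (fun x _ => (x, y)) ?_ ?_ ?_ ?_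
  · intro p hp
    simp only [Finset.mem_filter, Finset.mem_univ, true_and] at hp ⊢
    rcases hp with ⟨h1, h2⟩; subst h2; exact h1
  · intro x hx
    simp only [Finset.mem_filter, Finset.mem_univ, true_and] at hx ⊢
    exact ⟨hx, trivial⟩
  · intro p hp
    simp only [Finset.mem_filter, Finset.mem_univ, true_and] at hp
    exact Prod.ext rfl hp.2.symm
  · intro y _; rfl

lemma card_val_lt (ρ : Equiv.Perm (Fin n)) (a : Fin n) :
    (Finset.univ.filter fun y => ρ y < a).card = (a : ℕ) := by
  rw [← Fin.card_Iio a]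
  refine Finset.card_bij (fun y _ => ρ y) ?_ ?_ ?_
  · intro y hy; simpa using (Finset.mem_filter.mp hy).2
  · intro y _ y' _ h; exact ρ.injective h
  · intro b hb; exact ⟨ρ.symm b, by simpa using Finset.mem_Iio.mp hb, by simp⟩

lemma card_val_gt (ρ : Equiv.Perm (Fin n)) (a : Fin n) :
    (Finset.univ.filter fun y => a < ρ y).card = n - 1 - (a : ℕ) := by
  rw [← Fin.card_Ioi a]
  refine Finset.card_bij (fun y _ => ρ y) ?_ ?_ ?_
  · intro y hy; simpa using (Finset.mem_filter.mp hy).2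
  · intro y _ y' _ h; exact ρ.injective h
  · intro b hb; exact ⟨ρ.symm b, by simpa using Finset.mem_Ioi.mp hb, by simp⟩

lemma sum_B_eq (ρ : Equiv.Perm (Fin n)) :
    ∑ x : Fin n, (Finset.univ.filter fun y => y < x ∧ ρ x < ρ y).card = inv' ρ := by
  rw [← card_pairs (fun x y => y < x ∧ ρ x < ρ y)]
  unfold inv' invSet
  refine Finset.card_bij (fun p _ => (p.2, p.1)) ?_ ?_ ?_
  · intro p hp
    simp only [Finset.mem_filter, Finset.mem_univ, true_and] at hp ⊢
    exact ⟨hp.1, hp.2⟩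
  · intro p _ q _ h
    simpa [Prod.ext_iff, and_comm] using h
  · intro q hq
    simp only [Finset.mem_filter, Finset.mem_univ, true_and] at hq
    exact ⟨(q.2, q.1), by simpa using ⟨hq.1, hq.2⟩, rfl⟩

lemma disp_le_two_inv (ρ : Equiv.Perm (Fin n)) : disp ρ ≤ 2 * inv' ρ := by
  have key : ∀ x : Fin n, ((ρ x : ℤ) - (x : ℤ)).natAbs
      ≤ (Finset.univ.filter fun y => x < y ∧ ρ y < ρ x).card
        + (Finset.univ.filter fun y => y < x ∧ ρ x < ρ y).card := by
    intro x
    rcases le_or_gt (x : ℕ) (ρ x : ℕ) with h | h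
    · -- ρ x ≥ x : use first set
      have hsub : (Finset.univ.filter fun y => ρ y < ρ x)
          ⊆ (Finset.univ.filter fun y => x < y ∧ ρ y < ρ x) ∪ Finset.Iio x := by
        intro y hy
        simp only [Finset.mem_filter, Finset.mem_univ, true_and] at hy
        rcases lt_trichotomy y x with h1 | h1 | h1
        · exact Finset.mem_union_right _ (Finset.mem_Iio.mpr h1)
        · subst h1; exact absurd hy (lt_irrefl _)
        · exact Finset.mem_union_left _ (by simp [h1, hy])
      have h1 := Finset.card_le_card hsub
      rw [card_val_lt] at h1
      have h2 := Finset.card_union_le (Finset.univ.filter fun y => x < y ∧ ρ y < ρ x)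
        (Finset.Iio x)
      rw [Fin.card_Iio] at h2
      omega
    · -- ρ x < x : use second set
      have hsub : (Finset.univ.filter fun y => ρ x < ρ y)
          ⊆ (Finset.univ.filter fun y => y < x ∧ ρ x < ρ y) ∪ Finset.Ioi x := by
        intro y hy
        simp only [Finset.mem_filter, Finset.mem_univ, true_and] at hy
        rcases lt_trichotomy y x with h1 | h1 | h1
        · exact Finset.mem_union_left _ (by simp [h1, hy])
        · subst h1; exact absurd hy (lt_irrefl _)
        · exact Finset.mem_union_right _ (Finset.mem_Ioi.mpr h1)
      have h1 := Finset.card_le_card hsub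
      rw [card_val_gt] at h1
      have h2 := Finset.card_union_le (Finset.univ.filter fun y => y < x ∧ ρ x < ρ y)
        (Finset.Ioi x)
      rw [Fin.card_Ioi] at h2
      have hx : (x : ℕ) < n := x.isLt
      omega
  calc disp ρ ≤ ∑ x : Fin n, ((Finset.univ.filter fun y => x < y ∧ ρ y < ρ x).card
        + (Finset.univ.filter fun y => y < x ∧ ρ x < ρ y).card) :=
      Finset.sum_le_sum fun x _ => key x
    _ = inv' ρ + inv' ρ := by
      rw [Finset.sum_add_distrib, sum_B_eq, ← card_pairs (fun x y => x < y ∧ ρ y < ρ x)]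
      rfl
    _ = 2 * inv' ρ := by ring

/-- row count -/
def row (ρ : Equiv.Perm (Fin n)) (p : Fin n) : ℕ :=
  (Finset.univ.filter fun q => p < q ∧ ρ q < ρ p).card

lemma inv'_eq_sum_row (ρ : Equiv.Perm (Fin n)) : inv' ρ = ∑ p : Fin n, row ρ p := by
  unfold inv' invSet row
  exact card_pairs fun a b => a < b ∧ ρ b < ρ a

theorem inv_le_disp (ρ : Equiv.Perm (Fin n)) : inv' ρ ≤ disp ρ := by
  suffices H : ∀ N (ρ : Equiv.Perm (Fin n)), ρ.support.card ≤ N → inv' ρ ≤ disp ρ from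
    H _ ρ le_rfl
  intro N
  induction N with
  | zero =>
    intro ρ hρ
    have h0 : ρ.support = ∅ := Finset.card_eq_zero.mp (Nat.le_zero.mp hρ)
    have h1 : ρ = 1 := Equiv.Perm.support_eq_empty_iff.mp h0
    subst h1
    have : inv' (1 : Equiv.Perm (Fin n)) = 0 := by
      unfold inv' invSet
      rw [Finset.card_eq_zero, Finset.filter_eq_empty_iff]
      rintro p - ⟨h1, h2⟩
      simp only [Equiv.Perm.one_apply] at h2
      exact absurd h1 (not_lt.mpr h2.le)
    omega
  | succ N IH =>
    intro ρ hρ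
    rcases eq_or_ne ρ.support ∅ with h0 | h0
    · have h1 : ρ = 1 := Equiv.Perm.support_eq_empty_iff.mp h0
      subst h1
      have : inv' (1 : Equiv.Perm (Fin n)) = 0 := by
        unfold inv' invSet
        rw [Finset.card_eq_zero, Finset.filter_eq_empty_iff]
        rintro p - ⟨h1, h2⟩
        simp only [Equiv.Perm.one_apply] at h2
        exact absurd h1 (not_lt.mpr h2.le)
      omega
    have hne : ρ.support.Nonempty := Finset.nonempty_iff_ne_empty.mpr h0
    set x := ρ.support.max' hne with hxdef
    have hx_mem : x ∈ ρ.support := Finset.max'_mem _ _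
    have hxne : ρ x ≠ x := Equiv.Perm.mem_support.mp hx_mem
    have hmax : ∀ z, x < z → ρ z = z := by
      intro z hz
      by_contra h
      exact absurd (Finset.le_max' _ z (Equiv.Perm.mem_support.mpr h)) (not_le.mpr hz)
    have hle : ∀ z : Fin n, z ≤ x → ρ z ≤ x := by
      intro z hz
      by_contra h
      push_neg at h
      have h1 : ρ (ρ z) = ρ z := hmax _ h
      have h2 : z = ρ z := ρ.injective h1.symm
      exact absurd (h2 ▸ hz) (not_le.mpr (h2 ▸ h))
    have hρx : ρ x < x := lt_of_le_of_ne (hle x le_rfl) hxne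
    set u := ρ.symm x with hudef
    have hu : ρ u = x := ρ.apply_symm_apply x
    have hux : u < x := by
      rcases lt_trichotomy u x with h | h | h
      · exact h
      · exact absurd (h ▸ hu) hxne
      · exact absurd (hmax u h ▸ hu) (ne_of_lt h).symm
    have hvx : ∀ z, z < x → z ≠ u → ρ z < x := by
      intro z hz hzu
      refine lt_of_le_of_ne (hle z hz.le) fun h => hzu (ρ.injective (h.trans hu.symm))
    set ρ' := ρ * Equiv.swap u x with hρ'def
    have hρ'x : ρ' x = x := by
      simp only [hρ'def, Equiv.Perm.mul_apply, Equiv.swap_apply_right]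
      exact hu
    have hρ'u : ρ' u = ρ x := by
      simp only [hρ'def, Equiv.Perm.mul_apply, Equiv.swap_apply_left]
    have hρ'z : ∀ z, z ≠ u → z ≠ x → ρ' z = ρ z := by
      intro z h1 h2
      simp only [hρ'def, Equiv.Perm.mul_apply, Equiv.swap_apply_of_ne_of_ne h1 h2]
    have hu_mem : u ∈ ρ.support := by
      rw [Equiv.Perm.mem_support, hu]
      exact (ne_of_lt hux).symm
    -- support decrease
    have hsupp : ρ'.support.card ≤ N := by
      have hsub : ρ'.support ⊆ ρ.support.erase x := by
        intro z hz
        rw [Equiv.Perm.mem_support] at hz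
        rcases eq_or_ne z x with rfl | hzx
        · exact absurd hρ'x hz
        rcases eq_or_ne z u with rfl | hzu
        · exact Finset.mem_erase.mpr ⟨hzx, hu_mem⟩
        · rw [hρ'z z hzu hzx] at hz
          exact Finset.mem_erase.mpr ⟨hzx, Equiv.Perm.mem_support.mpr hz⟩
      have := Finset.card_le_card hsub
      have h2 := Finset.card_erase_of_mem hx_mem
      omega
    have IH' := IH ρ' hsupp
    -- the set K
    set K := Finset.univ.filter fun z => u < z ∧ z < x ∧ ρ x < ρ z with hKdef
    set k := K.card with hkdef
    have hk1 : k ≤ (x : ℕ) - (u : ℕ) - 1 := by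
      have hsub : K ⊆ Finset.Ioo u x := by
        intro z hz
        simp only [hKdef, Finset.mem_filter, Finset.mem_univ, true_and] at hz
        exact Finset.mem_Ioo.mpr ⟨hz.1, hz.2.1⟩
      have := Finset.card_le_card hsub
      rwa [Fin.card_Ioo] at this
    have hk2 : k ≤ (x : ℕ) - (ρ x : ℕ) - 1 := by
      have hinj : Set.InjOn ρ (K : Set (Fin n)) := fun a _ b _ h => ρ.injective h
      have hmap : ∀ z ∈ K, ρ z ∈ Finset.Ioo (ρ x) x := by
        intro z hz
        simp only [hKdef, Finset.mem_filter, Finset.mem_univ, true_and] at hz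
        exact Finset.mem_Ioo.mpr ⟨hz.2.2, hvx z hz.2.1 (ne_of_lt hz.1).symm⟩
      have := Finset.card_le_card_of_injOn ρ hmap hinj
      rwa [Fin.card_Ioo] at this
    have hux' : (u : ℕ) < (x : ℕ) := hux
    have hρx' : (ρ x : ℕ) < (x : ℕ) := hρx
    -- row-wise inequality
    have hrow : ∀ p : Fin n, row ρ p ≤ row ρ' p +
        ((if p = u then 1 + k else 0) + (if u < p ∧ p < x ∧ ρ x < ρ p then 1 else 0)) := by
      intro p
      rcases eq_or_ne p u with rfl | hpu
      · -- p = u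
        rw [if_pos rfl]
        have hif0 : ¬(u < u ∧ u < x ∧ ρ x < ρ u) := fun h => lt_irrefl u h.1
        rw [if_neg hif0]
        have ha : row ρ u ≤ (x : ℕ) - (u : ℕ) := by
          have hsub : (Finset.univ.filter fun q => u < q ∧ ρ q < ρ u) ⊆ Finset.Ioc u x := by
            intro q hq
            simp only [Finset.mem_filter, Finset.mem_univ, true_and, hu] at hq
            refine Finset.mem_Ioc.mpr ⟨hq.1, ?_⟩
            by_contra h
            push_neg at h
            rw [hmax q h] at hq
            exact absurd (hq.2.trans h) (lt_irrefl _)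
          have := Finset.card_le_card hsub
          rwa [Fin.card_Ioc] at this
        have hb : (x : ℕ) - (u : ℕ) - 1 ≤ k + row ρ' u := by
          have hsub : Finset.Ioo u x ⊆ K ∪ (Finset.univ.filter fun q => u < q ∧ ρ' q < ρ' u) := by
            intro q hq
            rw [Finset.mem_Ioo] at hq
            have hq1 : q ≠ u := (ne_of_lt hq.1).symm
            have hq2 : q ≠ x := ne_of_lt hq.2
            rcases lt_or_gt_of_ne (fun h : ρ q = ρ x => hq2 (ρ.injective h)) with h | h
            · refine Finset.mem_union_right _ ?_
              simp only [Finset.mem_filter, Finset.mem_univ, true_and]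
              rw [hρ'z q hq1 hq2, hρ'u]
              exact ⟨hq.1, h⟩
            · refine Finset.mem_union_left _ ?_
              simp only [hKdef, Finset.mem_filter, Finset.mem_univ, true_and]
              exact ⟨hq.1, hq.2, h⟩
          have h1 := Finset.card_le_card hsub
          have h2 := Finset.card_union_le K (Finset.univ.filter fun q => u < q ∧ ρ' q < ρ' u)
          rw [Fin.card_Ioo] at h1
          unfold row
          omega
        unfold row at ha hb ⊢
        omega
      · rw [if_neg hpu]
        rcases lt_trichotomy p x with hpx | rfl | hpx
        · rcases lt_or_gt_of_ne hpu with hplt | hpgt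
          · -- p < u : row ρ p ≤ row ρ' p
            have hif0 : ¬(u < p ∧ p < x ∧ ρ x < ρ p) := fun h => absurd hplt (not_lt.mpr h.1.le)
            rw [if_neg hif0]
            have key : row ρ p ≤ row ρ' p := by
              have hρ'p : ρ' p = ρ p := hρ'z p hpu (ne_of_lt hpx)
              apply Finset.card_le_card_of_injOn (fun q => if q = x then u else q)
              · intro q hq
                simp only [Finset.mem_coe, Finset.mem_filter, Finset.mem_univ, true_and] at hq ⊢
                rcases eq_or_ne q x with rfl | hqx
                · rw [if_pos rfl, hρ'u, hρ'p]
                  exact ⟨hplt, hq.2⟩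
                · have hqu : q ≠ u := by
                    rintro rfl
                    have : ρ p < x := hvx p hpx hpu
                    rw [hu] at hq
                    exact absurd (this.trans hq.2) (lt_irrefl _)
                  rw [if_neg hqx, hρ'z q hqu hqx, hρ'p]
                  exact hq
              · intro a ha b hb hab
                simp only [Finset.coe_filter, Set.mem_setOf_eq] at ha hb
                have hau : a ≠ u := by
                  rintro rfl
                  rw [hu] at ha
                  exact absurd ((hvx p hpx hpu).trans ha.2.2) (lt_irrefl _)
                have hbu : b ≠ u := by
                  rintro rfl
                  rw [hu] at hb
                  exact absurd ((hvx p hpx hpu).trans hb.2.2) (lt_irrefl _)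
                simp only at hab
                by_cases hax : a = x <;> by_cases hbx : b = x
                · rw [hax, hbx]
                · rw [if_pos hax, if_neg hbx] at hab; exact absurd hab.symm hbu
                · rw [if_neg hax, if_pos hbx] at hab; exact absurd hab hau
                · rwa [if_neg hax, if_neg hbx] at hab
            omega
          · -- u < p < x
            have hρ'p : ρ' p = ρ p := hρ'z p hpu (ne_of_lt hpx)
            have hsub : (Finset.univ.filter fun q => p < q ∧ ρ q < ρ p) \ {x}
                ⊆ (Finset.univ.filter fun q => p < q ∧ ρ' q < ρ' p) := by
              intro q hq
              rw [Finset.mem_sdiff, Finset.mem_singleton] at hq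
              rcases hq with ⟨hq, hqx⟩
              simp only [Finset.mem_filter, Finset.mem_univ, true_and] at hq ⊢
              have hqu : q ≠ u := (ne_of_lt (hpgt.trans hq.1)).symm
              rw [hρ'z q hqu hqx, hρ'p]
              exact hq
            by_cases hK : ρ x < ρ p
            · rw [if_pos ⟨hpgt, hpx, hK⟩]
              have h1 := Finset.card_le_card hsub
              have h2 := Finset.le_card_sdiff ({x} : Finset (Fin n)) (Finset.univ.filter fun q => p < q ∧ ρ q < ρ p)
              unfold row
              have h3 : ({x} : Finset (Fin n)).card = 1 := Finset.card_singleton x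
              omega
            · rw [if_neg (fun h => hK h.2.2)]
              have hxnot : x ∉ (Finset.univ.filter fun q => p < q ∧ ρ q < ρ p) := by
                simp only [Finset.mem_filter, Finset.mem_univ, true_and, not_and]
                intro _
                exact fun h => hK h
              have hsub2 : (Finset.univ.filter fun q => p < q ∧ ρ q < ρ p)
                  ⊆ (Finset.univ.filter fun q => p < q ∧ ρ' q < ρ' p) := by
                intro q hq
                refine hsub ?_
                rw [Finset.mem_sdiff, Finset.mem_singleton]
                exact ⟨hq, fun h => hxnot (h ▸ hq)⟩
              have := Finset.card_le_card hsub2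
              unfold row
              omega
        · -- p = x
          have hz : row ρ x = 0 := by
            unfold row
            rw [Finset.card_eq_zero, Finset.filter_eq_empty_iff]
            rintro q - ⟨h1, h2⟩
            rw [hmax q h1] at h2
            exact absurd (hρx.trans h1) (not_lt.mpr h2.le)
          omega
        · -- x < p
          have hz : row ρ p = 0 := by
            unfold row
            rw [Finset.card_eq_zero, Finset.filter_eq_empty_iff]
            rintro q - ⟨h1, h2⟩
            rw [hmax q (hpx.trans h1), hmax p hpx] at h2
            exact absurd (h2.trans h1) (lt_irrefl _)
          omega
    -- sum the rows
    have hinv : inv' ρ ≤ inv' ρ' + (1 + 2 * k) := by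
      rw [inv'_eq_sum_row, inv'_eq_sum_row]
      calc ∑ p : Fin n, row ρ p ≤ ∑ p : Fin n, (row ρ' p +
          ((if p = u then 1 + k else 0) + (if u < p ∧ p < x ∧ ρ x < ρ p then 1 else 0))) :=
            Finset.sum_le_sum fun p _ => hrow p
        _ = (∑ p : Fin n, row ρ' p) + ((1 + k) + k) := by
            rw [Finset.sum_add_distrib, Finset.sum_add_distrib]
            congr 1
            congr 1
            · simp [Finset.sum_ite_eq']
            · rw [← Finset.card_filter]
        _ = (∑ p : Fin n, row ρ' p) + (1 + 2 * k) := by ring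
    -- displacement change
    have hdisp : disp ρ' + (1 + 2 * k) ≤ disp ρ := by
      have hnexu : u ≠ x := ne_of_lt hux
      have hsplit : ∀ τ : Equiv.Perm (Fin n), disp τ =
          (((τ u : ℤ) - (u : ℤ)).natAbs + ((τ x : ℤ) - (x : ℤ)).natAbs)
          + ∑ z ∈ ({u, x} : Finset (Fin n))ᶜ, ((τ z : ℤ) - (z : ℤ)).natAbs := by
        intro τ
        rw [disp, ← Finset.sum_add_sum_compl ({u, x} : Finset (Fin n)), Finset.sum_pair hnexu]
      rw [hsplit ρ, hsplit ρ']
      have hcompl : ∑ z ∈ ({u, x} : Finset (Fin n))ᶜ, ((ρ' z : ℤ) - (z : ℤ)).natAbs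
          = ∑ z ∈ ({u, x} : Finset (Fin n))ᶜ, ((ρ z : ℤ) - (z : ℤ)).natAbs := by
        refine Finset.sum_congr rfl fun z hz => ?_
        simp only [Finset.mem_compl, Finset.mem_insert, Finset.mem_singleton, not_or] at hz
        rw [hρ'z z hz.1 hz.2]
      rw [hcompl, hρ'u, hρ'x, hu]
      have e1 : ((ρ x : ℤ) - (u : ℤ)).natAbs + ((x : ℤ) - (x : ℤ)).natAbs + (1 + 2 * k)
          ≤ ((x : ℤ) - (u : ℤ)).natAbs + ((ρ x : ℤ) - (x : ℤ)).natAbs := by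
        have c1 : ((ρ x : Fin n) : ℤ) = ((ρ x : ℕ) : ℤ) := rfl
        omega
      omega
    omega

lemma spearman_eq (σ π : Equiv.Perm (Fin n)) : spearman σ π = disp (σ * π⁻¹) := by
  rw [spearman, disp, ← Equiv.sum_comp π (fun z => (((σ * π⁻¹) z : ℤ) - (z : ℤ)).natAbs)]
  refine Finset.sum_congr rfl fun x _ => ?_
  simp [Equiv.Perm.mul_apply]

lemma kendall_eq (σ π : Equiv.Perm (Fin n)) : kendall σ π = inv' (σ * π⁻¹) := by
  rw [kendall, inv', invSet]
  refine Finset.card_bij'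
    (fun p _ => if π p.1 < π p.2 then (π p.1, π p.2) else (π p.2, π p.1))
    (fun q _ => if π⁻¹ q.1 < π⁻¹ q.2 then (π⁻¹ q.1, π⁻¹ q.2) else (π⁻¹ q.2, π⁻¹ q.1))
    ?_ ?_ ?_ ?_
  · rintro p hp
    simp only [Finset.mem_filter, Finset.mem_univ, true_and] at hp ⊢
    rcases hp with ⟨h12, hc⟩
    rcases hc with ⟨hσ, hπ⟩ | ⟨hσ, hπ⟩
    · rw [if_neg (not_lt.mpr hπ.le)]
      refine ⟨hπ, ?_⟩
      simp only [Equiv.Perm.mul_apply, Equiv.Perm.inv_def, Equiv.symm_apply_apply]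
      exact hσ
    · rw [if_pos hπ]
      refine ⟨hπ, ?_⟩
      simp only [Equiv.Perm.mul_apply, Equiv.Perm.inv_def, Equiv.symm_apply_apply]
      exact hσ
  · rintro q hq
    simp only [Finset.mem_filter, Finset.mem_univ, true_and] at hq ⊢
    rcases hq with ⟨h12, hv⟩
    simp only [Equiv.Perm.mul_apply] at hv
    rcases lt_or_gt_of_ne (fun h : π⁻¹ q.1 = π⁻¹ q.2 => (ne_of_lt h12) (π⁻¹.injective h)) with h | h
    · rw [if_pos h]
      refine ⟨h, Or.inr ⟨hv, ?_⟩⟩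
      simp only [Equiv.Perm.inv_def, Equiv.apply_symm_apply]
      exact h12
    · rw [if_neg (not_lt.mpr h.le)]
      refine ⟨h, Or.inl ⟨hv, ?_⟩⟩
      simp only [Equiv.Perm.inv_def, Equiv.apply_symm_apply]
      exact h12
  · rintro p hp
    simp only [Finset.mem_filter, Finset.mem_univ, true_and] at hp
    rcases hp with ⟨h12, -⟩
    have h12' : ¬ p.2 < p.1 := not_lt.mpr h12.le
    by_cases hπ : π p.1 < π p.2 <;>
      simp [hπ, h12, h12', Equiv.Perm.inv_def, Equiv.symm_apply_apply]
  · rintro q hq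
    simp only [Finset.mem_filter, Finset.mem_univ, true_and] at hq
    rcases hq with ⟨h12, -⟩
    have h12' : ¬ q.2 < q.1 := not_lt.mpr h12.le
    by_cases hπ : π⁻¹ q.1 < π⁻¹ q.2 <;>
      (simp only [Equiv.Perm.inv_def] at hπ; simp [hπ, h12, h12', Equiv.Perm.inv_def, Equiv.apply_symm_apply])
end DG

/-- Diaconis–Graham: `d_τ(σ,π) ≤ d_S(σ,π) ≤ 2 d_τ(σ,π)`. -/
theorem kendall_le_spearman_le_two_kendall {n : ℕ} (σ π : Equiv.Perm (Fin n)) :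
    kendall σ π ≤ spearman σ π ∧ spearman σ π ≤ 2 * kendall σ π := by
  constructor
  · rw [DG.kendall_eq, DG.spearman_eq]
    exact DG.inv_le_disp _
  · rw [DG.spearman_eq, DG.kendall_eq]
    exact DG.disp_le_two_inv _
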